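/- Let k ≥ 2 and let G₁, G₂, …, G_k be finite simple graphs on pairwise disjoint vertex sets, each having at least two vertices and containing no well-connected vertex. Then C^ξ(G₁ + G₂ + ⋯ + G_k) = ∑_{i=1}^{k} |E(G_i)| + (1/2)·(∑_{i=1}^{k} |V(G_i)|)² − (1/2)·∑_{i=1}^{k} |V(G_i)|². -/

import Mathlib

/-- The eccentricity of a vertex `v` in a finite graph `G`:
the maximum distance from `v` to any other vertex. -/
noncomputable def eccentricity {V : Type*} [Fintype V] (G : SimpleGraph V) (v : V) : ℕ :=
  Finset.univ.sup fun u => G.dist v u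

/-- The connective eccentric index `C^ξ(G) = ∑_v deg(v)/ε(v)`, as a rational number. -/
noncomputable def connEccIndex {V : Type*} [Fintype V] (G : SimpleGraph V) : ℚ :=
  letI := Classical.decRel G.Adj
  ∑ v : V, (G.degree v : ℚ) / (eccentricity G v)

/-- The number of edges of `G`. -/
noncomputable def numEdges {V : Type*} (G : SimpleGraph V) : ℕ := G.edgeSet.ncard

/-- A vertex is well-connected if it is adjacent to every other vertex. -/
def IsWellConnected {V : Type*} (G : SimpleGraph V) (v : V) : Prop :=
  ∀ u : V, u ≠ v → G.Adj v u

/-- The join `G₁ + ⋯ + G_k` of a family of graphs on pairwise disjoint vertex sets: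
all edges of the `G i`, together with all pairs of vertices lying in two different parts. -/
def multiJoin {ι : Type*} {V : ι → Type*} (G : ∀ i, SimpleGraph (V i)) :
    SimpleGraph (Σ i, V i) where
  Adj x y := x.1 ≠ y.1 ∨ ∃ h : x.1 = y.1, (G y.1).Adj (h ▸ x.2) y.2
  symm := by
    constructor
    rintro ⟨i, u⟩ ⟨j, v⟩ h
    dsimp only at h ⊢
    rcases h with hne | ⟨rfl, hadj⟩
    · exact Or.inl hne.symm
    · exact Or.inr ⟨rfl, (G i).symm.symm _ _ hadj⟩
  loopless := by
    constructor
    rintro ⟨i, u⟩ h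
    dsimp only at h
    rcases h with hne | ⟨h, hadj⟩
    · exact hne rfl
    · exact (G i).loopless.irrefl u hadj


section multiJoinAux

variable {k : ℕ} {V : Fin k → Type*} [∀ i, Fintype (V i)] {G : ∀ i, SimpleGraph (V i)}

omit [∀ i, Fintype (V i)] in
lemma multiJoin_adj_same {i : Fin k} {v w : V i} :
    (multiJoin G).Adj ⟨i, v⟩ ⟨i, w⟩ ↔ (G i).Adj v w := by
  constructor
  · rintro (h | ⟨h, hadj⟩)
    · exact absurd rfl h
    · exact hadj
  · exact fun h => Or.inr ⟨rfl, h⟩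

omit [∀ i, Fintype (V i)] in
lemma multiJoin_adj_ne {i j : Fin k} (h : i ≠ j) (v : V i) (w : V j) :
    (multiJoin G).Adj ⟨i, v⟩ ⟨j, w⟩ := Or.inl h

lemma multiJoin_degree {i : Fin k} (v : V i)
    [DecidableRel (multiJoin G).Adj] [DecidableRel (G i).Adj] :
    (multiJoin G).degree ⟨i, v⟩ + Fintype.card (V i)
      = (G i).degree v + Fintype.card (Σ j, V j) := by
  classical
  have hdeg : (multiJoin G).degree ⟨i, v⟩
      = ∑ j, ∑ w : V j, if (multiJoin G).Adj ⟨i, v⟩ ⟨j, w⟩ then 1 else 0 := by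
    rw [← SimpleGraph.card_neighborFinset_eq_degree, SimpleGraph.neighborFinset_eq_filter,
      Finset.card_filter, ← Finset.univ_sigma_univ, Finset.sum_sigma]
  have hsame : ∑ w : V i, (if (multiJoin G).Adj ⟨i, v⟩ ⟨i, w⟩ then 1 else 0)
      = (G i).degree v := by
    simp only [multiJoin_adj_same]
    rw [← SimpleGraph.card_neighborFinset_eq_degree, SimpleGraph.neighborFinset_eq_filter,
      Finset.card_filter]
  have hother : ∀ j ≠ i, ∑ w : V j, (if (multiJoin G).Adj ⟨i, v⟩ ⟨j, w⟩ then 1 else 0)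
      = Fintype.card (V j) := by
    intro j hj
    simp [multiJoin_adj_ne (Ne.symm hj)]
  have hsplit : ∑ j, ∑ w : V j, (if (multiJoin G).Adj ⟨i, v⟩ ⟨j, w⟩ then 1 else 0)
      = (G i).degree v + ∑ j ∈ Finset.univ.erase i, Fintype.card (V j) := by
    rw [← Finset.add_sum_erase _ _ (Finset.mem_univ i), hsame]
    congr 1
    exact Finset.sum_congr rfl fun j hj => hother j (Finset.ne_of_mem_erase hj)
  have h2 := Finset.add_sum_erase Finset.univ (fun j => Fintype.card (V j)) (Finset.mem_univ i)
  beta_reduce at h2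
  rw [hdeg, hsplit, Fintype.card_sigma]
  omega

lemma multiJoin_ecc (hk : 2 ≤ k) (hcard : ∀ i, 2 ≤ Fintype.card (V i))
    (hwc : ∀ i, ∀ v : V i, ¬ IsWellConnected (G i) v) (x : Σ i, V i) :
    eccentricity (multiJoin G) x = 2 := by
  obtain ⟨i, v⟩ := x
  obtain ⟨j', hj'⟩ : ∃ j' : Fin k, j' ≠ i := by
    haveI : Nontrivial (Fin k) := ⟨⟨⟨0, by omega⟩, ⟨1, by omega⟩, by simp [Fin.ext_iff]⟩⟩
    exact exists_ne i
  obtain ⟨w'⟩ : Nonempty (V j') := Fintype.card_pos_iff.mp (by have := hcard j'; omega)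
  have hle : ∀ u : Σ j, V j, (multiJoin G).dist ⟨i, v⟩ u ≤ 2 := by
    rintro ⟨j, w⟩
    by_cases hji : j = i
    · subst hji
      have := SimpleGraph.dist_le (G := multiJoin G)
        (SimpleGraph.Walk.cons (multiJoin_adj_ne (G := G) (Ne.symm hj') v w')
          (SimpleGraph.Walk.cons (multiJoin_adj_ne (G := G) hj' w' w) SimpleGraph.Walk.nil))
      simpa using this
    · have : (multiJoin G).dist ⟨i, v⟩ ⟨j, w⟩ = 1 :=
        SimpleGraph.dist_eq_one_iff_adj.mpr (multiJoin_adj_ne (fun h => hji h.symm) v w)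
      omega
  obtain ⟨u, hune, hunadj⟩ : ∃ u : V i, u ≠ v ∧ ¬ (G i).Adj v u := by
    have h := hwc i v
    unfold IsWellConnected at h
    push_neg at h
    exact h
  have hreach : (multiJoin G).Reachable ⟨i, v⟩ ⟨i, u⟩ :=
    ⟨SimpleGraph.Walk.cons (multiJoin_adj_ne (G := G) (Ne.symm hj') v w')
      (SimpleGraph.Walk.cons (multiJoin_adj_ne (G := G) hj' w' u) SimpleGraph.Walk.nil)⟩
  have h0 : (multiJoin G).dist ⟨i, v⟩ ⟨i, u⟩ ≠ 0 := by
    rw [Ne, hreach.dist_eq_zero_iff]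
    simp [hune.symm]
  have h1 : (multiJoin G).dist ⟨i, v⟩ ⟨i, u⟩ ≠ 1 := fun h =>
    hunadj (multiJoin_adj_same.mp (SimpleGraph.dist_eq_one_iff_adj.mp h))
  refine le_antisymm (Finset.sup_le fun u _ => hle u) ?_
  calc 2 ≤ (multiJoin G).dist ⟨i, v⟩ ⟨i, u⟩ := by omega
    _ ≤ _ := Finset.le_sup (f := fun u => (multiJoin G).dist ⟨i, v⟩ u) (Finset.mem_univ (⟨i, u⟩ : Σ j, V j))

end multiJoinAux

/-- The connective eccentric index of the join of `k` graphs, none containing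
well-connected vertices, equals
`∑ |E(G_i)| + (1/2)(∑ |V(G_i)|)² − (1/2)∑ |V(G_i)|²`. -/
theorem connEccIndex_multiJoin {k : ℕ} (hk : 2 ≤ k) (V : Fin k → Type*)
    [∀ i, Fintype (V i)] (G : ∀ i, SimpleGraph (V i))
    (hcard : ∀ i, 2 ≤ Fintype.card (V i))
    (hwc : ∀ i, ∀ v : V i, ¬ IsWellConnected (G i) v) :
    connEccIndex (multiJoin G) =
      (∑ i, (numEdges (G i) : ℚ))
        + (1 / 2) * (∑ i, (Fintype.card (V i) : ℚ)) ^ 2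
        - (1 / 2) * ∑ i, (Fintype.card (V i) : ℚ) ^ 2 := by
  classical
  have hecc := multiJoin_ecc (G := G) hk hcard hwc
  have step1 : connEccIndex (multiJoin G)
      = (∑ x : Σ j, V j, ((multiJoin G).degree x : ℚ)) / 2 := by
    rw [connEccIndex, Finset.sum_div]
    exact Finset.sum_congr rfl fun x _ => by rw [hecc x]; norm_num
  have hdeg : ∀ (i : Fin k) (v : V i),
      ((multiJoin G).degree ⟨i, v⟩ : ℚ)
        = ((G i).degree v : ℚ)
          + ((Fintype.card (Σ j, V j) : ℚ) - (Fintype.card (V i) : ℚ)) := by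
    intro i v
    have h := congrArg (Nat.cast : ℕ → ℚ) (multiJoin_degree (G := G) v)
    push_cast at h
    linarith
  have hE : ∀ i, (∑ v : V i, ((G i).degree v : ℚ)) = 2 * (numEdges (G i) : ℚ) := by
    intro i
    rw [← Nat.cast_sum, SimpleGraph.sum_degrees_eq_twice_card_edges]
    push_cast
    congr 1
    rw [numEdges, Set.ncard_eq_toFinset_card']
    exact congrArg (fun s : Finset _ => (s.card : ℚ)) (Finset.ext fun e => by simp)
  have hN : (Fintype.card (Σ j, V j) : ℚ) = ∑ i, (Fintype.card (V i) : ℚ) := by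
    rw [Fintype.card_sigma]
    push_cast
    rfl
  have hsum : (∑ x : Σ j, V j, ((multiJoin G).degree x : ℚ))
      = ∑ i, (2 * (numEdges (G i) : ℚ)
          + (Fintype.card (V i) : ℚ)
            * ((∑ j, (Fintype.card (V j) : ℚ)) - (Fintype.card (V i) : ℚ))) := by
    rw [← Finset.univ_sigma_univ, Finset.sum_sigma]
    refine Finset.sum_congr rfl fun i _ => ?_
    rw [Finset.sum_congr rfl fun v _ => hdeg i v, Finset.sum_add_distrib,
      Finset.sum_const, Finset.card_univ, nsmul_eq_mul, hE, hN]
  rw [step1, hsum]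
  simp only [mul_sub]
  rw [Finset.sum_add_distrib, Finset.sum_sub_distrib, ← Finset.sum_mul, ← Finset.mul_sum]
  simp only [sq]
  ring
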